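/- arXiv:1501.04663 — 3 statements merged into one kernel-verified Lean document; each statement's English description precedes it below -/
import Mathlib

section
/- (PBH test, sufficiency direction) If for every eigenvalue λ of A, every nonzero left eigenvector q with qᵀA = λqᵀ satisfies qᵀB ≠ 0, then the controllability matrix [B, AB, ..., A^{n-1}B] has rank n. -/
open Matrix

/-- The controllability matrix `[B, AB, ..., A^{n-1}B]` of the pair `(A, B)`. -/
noncomputable def ctrbMatrix {n m : ℕ} (A : Matrix (Fin n) (Fin n) ℂ) (B : Matrix (Fin n) (Fin m) ℂ) :
    Matrix (Fin n) (Fin n × Fin m) ℂ :=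
  fun i p => (A ^ (p.1 : ℕ) * B) i p.2

/-- `vecMul q` as a linear map in the matrix argument. -/
noncomputable def vecMulMatLin {n : ℕ} {K : Type*} [Fintype K] (q : Fin n → ℂ) :
    Matrix (Fin n) K ℂ →ₗ[ℂ] (K → ℂ) where
  toFun M := Matrix.vecMul q M
  map_add' M N := Matrix.vecMul_add M N q
  map_smul' c M := by
    funext j
    simp [Matrix.vecMul, dotProduct, Finset.mul_sum, mul_left_comm]

/-- If a matrix with `n` rows has trivial left null space, its rank is `n`. -/
lemma rank_eq_of_vecMul_injective {n : ℕ} {K : Type*} [Fintype K] [DecidableEq K]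
    (M : Matrix (Fin n) K ℂ)
    (h : ∀ q : Fin n → ℂ, Matrix.vecMul q M = 0 → q = 0) : M.rank = n := by
  have hker : LinearMap.ker (Mᵀ.mulVecLin) = ⊥ := by
    rw [LinearMap.ker_eq_bot']
    intro q hq
    apply h
    rwa [← Matrix.mulVec_transpose]
  have hrn := LinearMap.finrank_range_add_finrank_ker (Mᵀ.mulVecLin)
  rw [hker, finrank_bot, add_zero] at hrn
  have hT : Mᵀ.rank = n := by
    rw [Matrix.rank, hrn, Module.finrank_fin_fun]
  rw [← Matrix.rank_transpose, hT]

theorem pbh_sufficiency {n m : ℕ}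
    (A : Matrix (Fin n) (Fin n) ℂ) (B : Matrix (Fin n) (Fin m) ℂ)
    (hpbh : ∀ (q : Fin n → ℂ) (lam : ℂ),
      q ≠ 0 → Matrix.vecMul q A = lam • q → Matrix.vecMul q B ≠ 0) :
    (ctrbMatrix A B).rank = n := by
  classical
  apply rank_eq_of_vecMul_injective
  intro q hq
  by_contra hq0
  -- From `hq`, `q ᵥ* (A ^ k * B) = 0` for all `k < n`.
  have hlt : ∀ k : ℕ, k < n → Matrix.vecMul q (A ^ k * B) = 0 := by
    intro k hk
    funext j
    have := congrFun hq (⟨k, hk⟩, j)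
    simpa [ctrbMatrix, Matrix.vecMul, dotProduct] using this
  -- Cayley–Hamilton: A ^ n is a combination of lower powers.
  have hAn : A ^ n = ∑ i ∈ Finset.range n, (-(A.charpoly.coeff i)) • A ^ i := by
    have hdeg : A.charpoly.natDegree = n := by
      simp [Matrix.charpoly_natDegree_eq_dim]
    have hch := A.aeval_self_charpoly
    rw [Polynomial.aeval_eq_sum_range, hdeg, Finset.sum_range_succ] at hch
    have hlead : A.charpoly.coeff n = 1 := by
      have hm := A.charpoly_monic
      rw [Polynomial.Monic, Polynomial.leadingCoeff, hdeg] at hm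
      exact hm
    rw [hlead, one_smul] at hch
    have h1 : A ^ n = -∑ i ∈ Finset.range n, A.charpoly.coeff i • A ^ i := by
      have := eq_neg_of_add_eq_zero_right hch
      rw [← this]
    rw [h1, ← Finset.sum_neg_distrib]
    exact Finset.sum_congr rfl fun i _ => (neg_smul _ _).symm
  -- Extend to all powers.
  have hall : ∀ k : ℕ, Matrix.vecMul q (A ^ k * B) = 0 := by
    intro k
    induction k using Nat.strong_induction_on with
    | _ k ih =>
      rcases lt_or_ge k n with hk | hk
      · exact hlt k hk
      · have hdecomp : A ^ k * B =
            ∑ i ∈ Finset.range n, (-(A.charpoly.coeff i)) • (A ^ (k - n + i) * B) := by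
          have : A ^ k = A ^ (k - n) * A ^ n := by
            rw [← pow_add]; congr 1; omega
          rw [this, hAn, Matrix.mul_sum, Matrix.sum_mul]
          refine Finset.sum_congr rfl fun i hi => ?_
          rw [Matrix.mul_smul, Matrix.smul_mul, ← pow_add]
        calc Matrix.vecMul q (A ^ k * B)
            = vecMulMatLin q (∑ i ∈ Finset.range n,
                (-(A.charpoly.coeff i)) • (A ^ (k - n + i) * B)) := by
              rw [← hdecomp]; rfl
          _ = ∑ i ∈ Finset.range n,
                (-(A.charpoly.coeff i)) • vecMulMatLin q (A ^ (k - n + i) * B) := by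
              rw [map_sum]
              exact Finset.sum_congr rfl fun i _ => by rw [_root_.map_smul]
          _ = 0 := by
              refine Finset.sum_eq_zero fun i hi => ?_
              have h0 : Matrix.vecMul q (A ^ (k - n + i) * B) = 0 :=
                ih (k - n + i) (by simp at hi; omega)
              show (-(A.charpoly.coeff i)) • Matrix.vecMul q (A ^ (k - n + i) * B) = 0
              rw [h0, smul_zero]
  -- The subspace of left null vectors of all `A ^ k * B` is invariant and nonzero.
  set W : Submodule ℂ (Fin n → ℂ) :=
    ⨅ k : ℕ, LinearMap.ker ((A ^ k * B).vecMulLinear) with hW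
  have memW : ∀ x : Fin n → ℂ, x ∈ W ↔ ∀ k : ℕ, Matrix.vecMul x (A ^ k * B) = 0 := by
    intro x
    simp [hW, Submodule.mem_iInf, LinearMap.mem_ker]
  have hqW : q ∈ W := (memW q).mpr hall
  set f : (Fin n → ℂ) →ₗ[ℂ] (Fin n → ℂ) := A.vecMulLinear with hf
  have hinv : ∀ x ∈ W, f x ∈ W := by
    intro x hx
    rw [memW] at hx ⊢
    intro k
    have : Matrix.vecMul (Matrix.vecMul x A) (A ^ k * B)
        = Matrix.vecMul x (A ^ (k + 1) * B) := by
      rw [Matrix.vecMul_vecMul, ← Matrix.mul_assoc, ← pow_succ']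
    simpa [hf, this] using hx (k + 1)
  set g : Module.End ℂ W := f.restrict hinv with hg
  have : Nontrivial W := by
    refine nontrivial_of_ne ⟨q, hqW⟩ 0 ?_
    intro h
    exact hq0 (by simpa using congrArg Subtype.val h)
  obtain ⟨lam, hlam⟩ := Module.End.exists_eigenvalue g
  obtain ⟨v, hv⟩ := hlam.exists_hasEigenvector
  have heig : Matrix.vecMul (v : Fin n → ℂ) A = lam • (v : Fin n → ℂ) := by
    have h1 := hv.apply_eq_smul
    have h2 := congrArg Subtype.val h1
    simpa [hg, hf, LinearMap.restrict_apply] using h2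
  have hne : (v : Fin n → ℂ) ≠ 0 := by
    intro h
    exact hv.2 (Subtype.ext h)
  have hB0 : Matrix.vecMul (v : Fin n → ℂ) B = 0 := by
    have := (memW v).mp v.2 0
    simpa using this
  exact hpbh (v : Fin n → ℂ) lam hne heig hB0
end

section
/- If q is a (possibly complex) row vector satisfying qᵀ A^{m-1}(A - BC) = λ qᵀ and qᵀ A^r B = 0 for all 0 ≤ r ≤ m−2, then qᵀ (A - BC)^m = λ qᵀ. Hence if λ_m is an m-th root of λ and qᵀ(A-BC) = λ_m qᵀ holds for some such root, together with qᵀB = 0, the pair (A - BC, B) fails the PBH controllability test at λ_m. -/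
open Matrix

theorem left_eigvec_pullback_pbh {n p : ℕ} {m : ℕ} (hm : 1 ≤ m)
    (A : Matrix (Fin n) (Fin n) ℂ) (B : Matrix (Fin n) (Fin p) ℂ)
    (C : Matrix (Fin p) (Fin n) ℂ) (q : Fin n → ℂ) (lam : ℂ)
    (heig : Matrix.vecMul q (A ^ (m - 1) * (A - B * C)) = lam • q)
    (horth : ∀ r : ℕ, r + 2 ≤ m → Matrix.vecMul q (A ^ r * B) = 0) :
    Matrix.vecMul q ((A - B * C) ^ m) = lam • q ∧
    (∀ lamm : ℂ, lamm ^ m = lam → q ≠ 0 →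
      Matrix.vecMul q (A - B * C) = lamm • q → Matrix.vecMul q B = 0 →
      ¬ (∀ (p' : Fin n → ℂ) (μ : ℂ), p' ≠ 0 →
          Matrix.vecMul p' (A - B * C) = μ • p' → Matrix.vecMul p' B ≠ 0)) := by
  constructor
  · have key : ∀ k, k ≤ m - 1 →
        Matrix.vecMul q ((A - B * C) ^ k) = Matrix.vecMul q (A ^ k) := by
      intro k hk
      induction k with
      | zero => simp
      | succ k ih =>
        have hk' : k ≤ m - 1 := Nat.le_of_succ_le hk
        have hk2 : k + 2 ≤ m := by omega
        calc Matrix.vecMul q ((A - B * C) ^ (k + 1))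
            = Matrix.vecMul (Matrix.vecMul q ((A - B * C) ^ k)) (A - B * C) := by
              rw [pow_succ, ← Matrix.vecMul_vecMul]
          _ = Matrix.vecMul (Matrix.vecMul q (A ^ k)) (A - B * C) := by rw [ih hk']
          _ = Matrix.vecMul q (A ^ k * A - A ^ k * B * C) := by
              rw [Matrix.vecMul_vecMul, mul_sub, ← Matrix.mul_assoc]
          _ = Matrix.vecMul q (A ^ k * A) - Matrix.vecMul (Matrix.vecMul q (A ^ k * B)) C := by
              rw [Matrix.vecMul_sub, Matrix.vecMul_vecMul]
          _ = Matrix.vecMul q (A ^ (k + 1)) := by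
              rw [horth k hk2, Matrix.zero_vecMul, sub_zero, pow_succ]
    have hmm : m = (m - 1) + 1 := by omega
    calc Matrix.vecMul q ((A - B * C) ^ m)
        = Matrix.vecMul (Matrix.vecMul q ((A - B * C) ^ (m - 1))) (A - B * C) := by
          conv_lhs => rw [hmm, pow_succ, ← Matrix.vecMul_vecMul]
      _ = Matrix.vecMul (Matrix.vecMul q (A ^ (m - 1))) (A - B * C) := by
          rw [key (m - 1) le_rfl]
      _ = lam • q := by rw [Matrix.vecMul_vecMul, heig]
  · intro lamm _ hq heigm hqB hPBH
    exact hPBH q lamm hq heigm hqB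
end

section
/- The Geweke measures are invariant under invertible linear scaling: if T_X and T_Y are invertible matrices and we replace Ω_X by T_X Ω_X T_Xᵀ, Σ_X by T_X Σ_X T_Xᵀ, Ω_Y by T_Y Ω_Y T_Yᵀ, Σ_Y by T_Y Σ_Y T_Yᵀ, and Σ by diag(T_X, T_Y) Σ diag(T_X, T_Y)ᵀ, then F_{Y→X}, F_{X→Y}, F_{Y·X}, and F_{X∘Y} are unchanged. -/
open Matrix

theorem geweke_measures_scale_invariant {n m : ℕ}
    (OmX SX : Matrix (Fin n) (Fin n) ℝ) (OmY SY : Matrix (Fin m) (Fin m) ℝ)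
    (SXY : Matrix (Fin n) (Fin m) ℝ)
    (hOmX : OmX.PosDef) (hOmY : OmY.PosDef)
    (hS : (Matrix.fromBlocks SX SXY SXYᵀ SY).PosDef)
    (TX : Matrix (Fin n) (Fin n) ℝ) (TY : Matrix (Fin m) (Fin m) ℝ)
    (hTX : IsUnit TX.det) (hTY : IsUnit TY.det) :
    let S : Matrix (Fin (n + m)) (Fin (n + m)) ℝ :=
      (Matrix.reindex finSumFinEquiv finSumFinEquiv) (Matrix.fromBlocks SX SXY SXYᵀ SY)
    let T : Matrix (Fin (n + m)) (Fin (n + m)) ℝ :=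
      (Matrix.reindex finSumFinEquiv finSumFinEquiv) (Matrix.fromBlocks TX 0 0 TY)
    (Real.log ((TX * OmX * TXᵀ).det / (TX * SX * TXᵀ).det) = Real.log (OmX.det / SX.det)) ∧
    (Real.log ((TY * OmY * TYᵀ).det / (TY * SY * TYᵀ).det) = Real.log (OmY.det / SY.det)) ∧
    (Real.log ((TX * SX * TXᵀ).det * (TY * SY * TYᵀ).det / (T * S * Tᵀ).det) =
      Real.log (SX.det * SY.det / S.det)) ∧
    (Real.log ((TX * OmX * TXᵀ).det * (TY * OmY * TYᵀ).det / (T * S * Tᵀ).det) =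
      Real.log (OmX.det * OmY.det / S.det)) := by
  intro S T
  have hTX0 : TX.det ≠ 0 := hTX.ne_zero
  have hTY0 : TY.det ≠ 0 := hTY.ne_zero
  have e : ∀ (k : ℕ) (P M : Matrix (Fin k) (Fin k) ℝ),
      (P * M * Pᵀ).det = P.det ^ 2 * M.det := by
    intro k P M
    rw [Matrix.det_mul, Matrix.det_mul, Matrix.det_transpose]
    ring
  have hT : T.det = TX.det * TY.det := by
    simp [T, Matrix.det_fromBlocks_zero₁₂]
  refine ⟨?_, ?_, ?_, ?_⟩
  · rw [e, e, mul_div_mul_left _ _ (pow_ne_zero 2 hTX0)]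
  · rw [e, e, mul_div_mul_left _ _ (pow_ne_zero 2 hTY0)]
  · rw [e, e, e, hT]
    have : TX.det ^ 2 * SX.det * (TY.det ^ 2 * SY.det) =
        (TX.det * TY.det) ^ 2 * (SX.det * SY.det) := by ring
    rw [this, mul_div_mul_left _ _ (pow_ne_zero 2 (mul_ne_zero hTX0 hTY0))]
  · rw [e, e, e, hT]
    have : TX.det ^ 2 * OmX.det * (TY.det ^ 2 * OmY.det) =
        (TX.det * TY.det) ^ 2 * (OmX.det * OmY.det) := by ring
    rw [this, mul_div_mul_left _ _ (pow_ne_zero 2 (mul_ne_zero hTX0 hTY0))]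
end
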